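/- Let d ≥ 1, let {φ_k : k ∈ ℤ} be a Parseval frame for L²(ℝ^d), and let {m_n}_{n=1}^{N} be an admissible collection of functions on ℝ^d. Define ψ_{k,n} = 𝓕⁻¹{m_n · 𝓕φ_k} for k ∈ ℤ and n = 1, …, N. Then {ψ_{k,n}} is again a Parseval frame for L²(ℝ^d): for every f ∈ L²(ℝ^d) one has ∑_{n=1}^{N} ∑_{k∈ℤ} |⟨f, ψ_{k,n}⟩|² = ‖f‖²_{L²(ℝ^d)}, and f = ∑_{n=1}^{N} ∑_{k∈ℤ} ⟨f, ψ_{k,n}⟩ ψ_{k,n} with convergence in L²(ℝ^d). -/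

import Mathlib

open MeasureTheory FourierTransform
open scoped ComplexInnerProductSpace

noncomputable section

section AuxFrameLemmas

variable {E : Type*} [NormedAddCommGroup E] [InnerProductSpace ℂ E] {ι : Type*}

lemma aux_summable_sq (φ : ι → E)
    (hφ : ∀ f : E, ∑' k, ‖⟪φ k, f⟫‖ ^ 2 = ‖f‖ ^ 2) (f : E) :
    Summable fun k => ‖⟪φ k, f⟫‖ ^ 2 := by
  by_cases h : Summable fun k => ‖⟪φ k, f⟫‖ ^ 2
  · exact h
  · have h0 : ‖f‖ ^ 2 = 0 := by rw [← hφ f, tsum_eq_zero_of_not_summable h]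
    have hf : f = 0 := by
      have := (pow_eq_zero_iff two_ne_zero).1 h0
      simpa [norm_eq_zero] using this
    subst hf
    refine absurd ?_ h
    simpa using summable_zero

lemma aux_bessel_bound (Ψ : ι → E)
    (h1 : ∀ x : E, Summable fun i => ‖⟪Ψ i, x⟫‖ ^ 2)
    (h2 : ∀ x : E, ∑' i, ‖⟪Ψ i, x⟫‖ ^ 2 = ‖x‖ ^ 2)
    (c : ι → ℂ) (t : Finset ι) :
    ‖∑ i ∈ t, c i • Ψ i‖ ≤ Real.sqrt (∑ i ∈ t, ‖c i‖ ^ 2) := by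
  set w := ∑ i ∈ t, c i • Ψ i with hw
  rcases eq_or_ne w 0 with h | h
  · simp [h, Real.sqrt_nonneg]
  · have hwpos : 0 < ‖w‖ := norm_pos_iff.2 h
    have key : ‖w‖ ^ 2 ≤ Real.sqrt (∑ i ∈ t, ‖c i‖ ^ 2) * ‖w‖ := by
      have e1 : (⟪w, w⟫ : ℂ) = ∑ i ∈ t, (starRingEnd ℂ) (c i) * ⟪Ψ i, w⟫ := by
        rw [hw, sum_inner]
        exact Finset.sum_congr rfl fun i _ => inner_smul_left _ _ _
      have e2 : ‖w‖ ^ 2 = ‖(⟪w, w⟫ : ℂ)‖ := by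
        rw [inner_self_eq_norm_sq_to_K]
        simp [norm_pow]
      have e3 : ‖(⟪w, w⟫ : ℂ)‖ ≤ ∑ i ∈ t, ‖c i‖ * ‖⟪Ψ i, w⟫‖ := by
        rw [e1]
        refine (norm_sum_le _ _).trans (le_of_eq ?_)
        refine Finset.sum_congr rfl fun i _ => ?_
        rw [norm_mul, RCLike.norm_conj]
      have e4 : ∑ i ∈ t, ‖c i‖ * ‖⟪Ψ i, w⟫‖ ≤
          Real.sqrt (∑ i ∈ t, ‖c i‖ ^ 2) * ‖w‖ := by
        have cs := Finset.sum_mul_sq_le_sq_mul_sq t (fun i => ‖c i‖) (fun i => ‖⟪Ψ i, w⟫‖)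
        have hbes : ∑ i ∈ t, ‖⟪Ψ i, w⟫‖ ^ 2 ≤ ‖w‖ ^ 2 := by
          rw [← h2 w]
          exact Summable.sum_le_tsum t (fun i _ => sq_nonneg _) (h1 w)
        have hnn : (0:ℝ) ≤ ∑ i ∈ t, ‖c i‖ * ‖⟪Ψ i, w⟫‖ :=
          Finset.sum_nonneg fun i _ => mul_nonneg (norm_nonneg _) (norm_nonneg _)
        rw [← Real.sqrt_sq hnn, ← Real.sqrt_sq (mul_nonneg (Real.sqrt_nonneg _) (norm_nonneg _))]
        refine Real.sqrt_le_sqrt ?_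
        calc (∑ i ∈ t, ‖c i‖ * ‖⟪Ψ i, w⟫‖) ^ 2
            ≤ (∑ i ∈ t, ‖c i‖ ^ 2) * (∑ i ∈ t, ‖⟪Ψ i, w⟫‖ ^ 2) := cs
          _ ≤ (∑ i ∈ t, ‖c i‖ ^ 2) * ‖w‖ ^ 2 := by
              refine mul_le_mul_of_nonneg_left hbes ?_
              exact Finset.sum_nonneg fun i _ => sq_nonneg _
          _ = (Real.sqrt (∑ i ∈ t, ‖c i‖ ^ 2) * ‖w‖) ^ 2 := by
              have hnn2 : (0:ℝ) ≤ ∑ i ∈ t, ‖c i‖ ^ 2 :=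
                Finset.sum_nonneg fun i _ => sq_nonneg _
              rw [mul_pow, Real.sq_sqrt hnn2]
      calc ‖w‖ ^ 2 = ‖(⟪w, w⟫ : ℂ)‖ := e2
        _ ≤ ∑ i ∈ t, ‖c i‖ * ‖⟪Ψ i, w⟫‖ := e3
        _ ≤ _ := e4
    have key' : ‖w‖ * ‖w‖ ≤ Real.sqrt (∑ i ∈ t, ‖c i‖ ^ 2) * ‖w‖ := by
      calc ‖w‖ * ‖w‖ = ‖w‖ ^ 2 := (sq ‖w‖).symm
        _ ≤ _ := key
    exact le_of_mul_le_mul_right key' hwpos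

lemma aux_synth_summable [CompleteSpace E] (Ψ : ι → E)
    (h1 : ∀ x : E, Summable fun i => ‖⟪Ψ i, x⟫‖ ^ 2)
    (h2 : ∀ x : E, ∑' i, ‖⟪Ψ i, x⟫‖ ^ 2 = ‖x‖ ^ 2)
    (c : ι → ℂ) (hc : Summable fun i => ‖c i‖ ^ 2) :
    Summable fun i => c i • Ψ i := by
  rw [summable_iff_vanishing_norm]
  intro ε hε
  obtain ⟨s, hs⟩ := summable_iff_vanishing_norm.1 hc (ε ^ 2) (by positivity)
  refine ⟨s, fun t ht => ?_⟩
  refine lt_of_le_of_lt (aux_bessel_bound Ψ h1 h2 c t) ?_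
  rw [Real.sqrt_lt' hε]
  have := hs t ht
  have hnn : (0:ℝ) ≤ ∑ i ∈ t, ‖c i‖ ^ 2 := Finset.sum_nonneg fun i _ => sq_nonneg _
  rwa [Real.norm_eq_abs, abs_of_nonneg hnn] at this

lemma aux_frame_reconstruction [CompleteSpace E] (Ψ : ι → E)
    (h1 : ∀ x : E, Summable fun i => ‖⟪Ψ i, x⟫‖ ^ 2)
    (h2 : ∀ x : E, ∑' i, ‖⟪Ψ i, x⟫‖ ^ 2 = ‖x‖ ^ 2) (f : E) :
    (Summable fun i => ⟪Ψ i, f⟫ • Ψ i) ∧ (∑' i, ⟪Ψ i, f⟫ • Ψ i) = f := by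
  have hsum : ∀ x : E, Summable fun i => ⟪Ψ i, x⟫ • Ψ i :=
    fun x => aux_synth_summable Ψ h1 h2 _ (h1 x)
  refine ⟨hsum f, ?_⟩
  set S : E → E := fun x => ∑' i, ⟪Ψ i, x⟫ • Ψ i with hS
  have hinnerS : ∀ x : E, ⟪x, S x⟫ = ((‖x‖ : ℂ)) ^ 2 := by
    intro x
    have e1 : ⟪x, S x⟫ = ∑' i, ⟪x, ⟪Ψ i, x⟫ • Ψ i⟫ := by
      rw [hS]
      exact ((innerSL ℂ x).map_tsum (hsum x))
    rw [e1]
    have e2 : ∀ i, ⟪x, ⟪Ψ i, x⟫ • Ψ i⟫ = ((‖⟪Ψ i, x⟫‖ ^ 2 : ℝ) : ℂ) := by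
      intro i
      rw [inner_smul_right, ← inner_conj_symm x (Ψ i), RCLike.mul_conj]
      norm_cast
    calc ∑' i, ⟪x, ⟪Ψ i, x⟫ • Ψ i⟫ = ∑' i, ((‖⟪Ψ i, x⟫‖ ^ 2 : ℝ) : ℂ) := by
          exact tsum_congr e2
      _ = ((∑' i, ‖⟪Ψ i, x⟫‖ ^ 2 : ℝ) : ℂ) := by simpa using (Complex.ofRealCLM.map_tsum (h1 x)).symm
      _ = ((‖x‖ : ℂ)) ^ 2 := by rw [h2 x]; push_cast; ring
  have hSadd : ∀ x y : E, S (x + y) = S x + S y := by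
    intro x y
    rw [hS]
    simp only
    rw [← Summable.tsum_add (hsum x) (hsum y)]
    refine tsum_congr fun i => ?_
    rw [inner_add_right, add_smul]
  have hSsmul : ∀ (a : ℂ) (x : E), S (a • x) = a • S x := by
    intro a x
    rw [hS]
    simp only
    rw [← Summable.tsum_const_smul a (hsum x)]
    refine tsum_congr fun i => ?_
    rw [inner_smul_right, mul_smul]
  set T : E →ₗ[ℂ] E :=
    { toFun := fun x => S x - x
      map_add' := by intro x y; show S (x+y) - (x+y) = (S x - x) + (S y - y); rw [hSadd]; abel
      map_smul' := by intro a x; show S (a•x) - a•x = a • (S x - x); rw [hSsmul, smul_sub] }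
    with hT
  have hT0 : T = 0 := by
    rw [← inner_map_self_eq_zero]
    intro x
    show ⟪S x - x, x⟫ = (0 : ℂ)
    rw [inner_sub_left]
    have h3 : ⟪S x, x⟫ = ((‖x‖ : ℂ)) ^ 2 := by
      rw [← inner_conj_symm (S x) x, hinnerS x]
      simp [← Complex.ofReal_pow]
    rw [h3, inner_self_eq_norm_sq_to_K]
    exact sub_self _
  have : T f = 0 := by rw [hT0]; rfl
  have : S f - f = 0 := this
  have : S f = f := by rwa [sub_eq_zero] at this
  exact this

end AuxFrameLemmas

set_option maxHeartbeats 1000000 in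
/-- If `{φ k}` is a Parseval frame for `L²(ℝᵈ)` and `{m n}` is an admissible
collection, then the family `ψ k n = 𝓕⁻¹{m_n ⬝ 𝓕 φ_k}` (characterized here by
`F (ψ k n) = m n ⬝ F (φ k)` a.e., where `F` is the Plancherel extension to `L²` of the
Fourier transform) is again a Parseval frame for `L²(ℝᵈ)`: the frame-norm identity holds
and every `f` is reproduced by its frame expansion (with convergence in `L²`). -/
theorem multiplier_transform_of_parseval_frame (d N : ℕ) (hd : 1 ≤ d)
    (m : Fin N → EuclideanSpace ℝ (Fin d) → ℂ)
    (hmeas : ∀ n, Measurable (m n))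
    (hhom : ∀ n (a : ℝ), 0 < a → ∀ ω : EuclideanSpace ℝ (Fin d), ω ≠ 0 →
      m n (a • ω) = m n ω)
    (hpart : ∀ ω : EuclideanSpace ℝ (Fin d), ω ≠ 0 → ∑ n, ‖m n ω‖ ^ 2 = 1)
    (F : Lp ℂ 2 (volume : Measure (EuclideanSpace ℝ (Fin d))) ≃ₗᵢ[ℂ]
         Lp ℂ 2 (volume : Measure (EuclideanSpace ℝ (Fin d))))
    (hF : ∀ f : Lp ℂ 2 (volume : Measure (EuclideanSpace ℝ (Fin d))),
      Integrable f volume →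
        (F f : EuclideanSpace ℝ (Fin d) → ℂ)
          =ᵐ[volume] 𝓕 (f : EuclideanSpace ℝ (Fin d) → ℂ))
    (hFinv : ∀ f : Lp ℂ 2 (volume : Measure (EuclideanSpace ℝ (Fin d))),
      Integrable f volume →
        (F.symm f : EuclideanSpace ℝ (Fin d) → ℂ)
          =ᵐ[volume] 𝓕⁻ (f : EuclideanSpace ℝ (Fin d) → ℂ))
    (φ : ℤ → Lp ℂ 2 (volume : Measure (EuclideanSpace ℝ (Fin d))))
    (hφ : ∀ f : Lp ℂ 2 (volume : Measure (EuclideanSpace ℝ (Fin d))),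
      ∑' k : ℤ, ‖⟪φ k, f⟫‖ ^ 2 = ‖f‖ ^ 2)
    (ψ : ℤ → Fin N → Lp ℂ 2 (volume : Measure (EuclideanSpace ℝ (Fin d))))
    (hψ : ∀ (k : ℤ) (n : Fin N),
      (F (ψ k n) : EuclideanSpace ℝ (Fin d) → ℂ)
        =ᵐ[volume] fun ω => m n ω * (F (φ k) : EuclideanSpace ℝ (Fin d) → ℂ) ω)
    (f : Lp ℂ 2 (volume : Measure (EuclideanSpace ℝ (Fin d)))) :
    (∑ n : Fin N, ∑' k : ℤ, ‖⟪ψ k n, f⟫‖ ^ 2 = ‖f‖ ^ 2) ∧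
      f = ∑ n : Fin N, ∑' k : ℤ, ⟪ψ k n, f⟫ • ψ k n := by
  classical
  haveI : Nonempty (Fin d) := ⟨⟨0, hd⟩⟩
  haveI : Nontrivial (EuclideanSpace ℝ (Fin d)) := inferInstance
  haveI : NullSingletonClass (volume : Measure (EuclideanSpace ℝ (Fin d))) := inferInstance
  have hne : ∀ᵐ ω ∂(volume : Measure (EuclideanSpace ℝ (Fin d))), ω ≠ 0 := by
    rw [ae_iff]
    simp only [ne_eq, not_not, Set.setOf_eq_eq_singleton]
    exact measure_singleton 0
  -- membership of the multiplied functions in L²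
  have hGmem : ∀ (n : Fin N) (g : Lp ℂ 2 (volume : Measure (EuclideanSpace ℝ (Fin d)))),
      MemLp (fun ω => (starRingEnd ℂ) (m n ω) *
        (F g : EuclideanSpace ℝ (Fin d) → ℂ) ω) 2 volume := by
    intro n g
    refine MemLp.of_le (Lp.memLp (F g)) ?_ ?_
    · exact ((RCLike.continuous_conj.measurable.comp
        (hmeas n)).aestronglyMeasurable.mul (Lp.aestronglyMeasurable (F g)))
    · filter_upwards [hne] with ω hω
      have h1 : ‖m n ω‖ ≤ 1 := by
        have h2 : ‖m n ω‖ ^ 2 ≤ 1 := by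
          rw [← hpart ω hω]
          exact Finset.single_le_sum (f := fun i => ‖m i ω‖ ^ 2) (fun i _ => sq_nonneg _) (Finset.mem_univ n)
        exact (pow_le_one_iff_of_nonneg (norm_nonneg _) two_ne_zero).1 h2
      calc ‖(starRingEnd ℂ) (m n ω) * (F g : EuclideanSpace ℝ (Fin d) → ℂ) ω‖
          = ‖m n ω‖ * ‖(F g : EuclideanSpace ℝ (Fin d) → ℂ) ω‖ := by
            rw [norm_mul, RCLike.norm_conj]
        _ ≤ 1 * ‖(F g : EuclideanSpace ℝ (Fin d) → ℂ) ω‖ :=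
            mul_le_mul_of_nonneg_right h1 (norm_nonneg _)
        _ = _ := one_mul _
  set θ : Fin N → Lp ℂ 2 (volume : Measure (EuclideanSpace ℝ (Fin d))) →
      Lp ℂ 2 (volume : Measure (EuclideanSpace ℝ (Fin d))) :=
    fun n g => F.symm ((hGmem n g).toLp _) with hθ
  -- key inner product identity
  have hinner : ∀ (k : ℤ) (n : Fin N)
      (g : Lp ℂ 2 (volume : Measure (EuclideanSpace ℝ (Fin d)))),
      ⟪ψ k n, g⟫ = ⟪φ k, θ n g⟫ := by
    intro k n g
    have e0 : ⟪ψ k n, g⟫ = ⟪F (ψ k n), F g⟫ := (F.inner_map_map _ _).symm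
    have e1 : ⟪φ k, θ n g⟫ = ⟪F (φ k), (hGmem n g).toLp _⟫ := by
      have e1' : F (θ n g) = (hGmem n g).toLp _ := by
        rw [hθ]; exact F.apply_symm_apply _
      rw [← e1', F.inner_map_map]
    rw [e0, e1, L2.inner_def, L2.inner_def]
    refine integral_congr_ae ?_
    filter_upwards [hψ k n, (hGmem n g).coeFn_toLp] with ω h1 h2
    rw [RCLike.inner_apply, RCLike.inner_apply, h1, h2, map_mul]
    ring
  -- the norm identity ∑ n ‖θ n g‖² = ‖g‖²
  have hnorm : ∀ g : Lp ℂ 2 (volume : Measure (EuclideanSpace ℝ (Fin d))),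
      ∑ n, ‖θ n g‖ ^ 2 = ‖g‖ ^ 2 := by
    intro g
    set u : Fin N → Lp ℂ 2 (volume : Measure (EuclideanSpace ℝ (Fin d))) :=
      fun n => (hGmem n g).toLp _ with hu
    have hcoe : ∀ᵐ ω ∂(volume : Measure (EuclideanSpace ℝ (Fin d))),
        ∀ n, (u n : EuclideanSpace ℝ (Fin d) → ℂ) ω =
          (starRingEnd ℂ) (m n ω) * (F g : EuclideanSpace ℝ (Fin d) → ℂ) ω :=
      ae_all_iff.2 fun n => (hGmem n g).coeFn_toLp
    have hC : ∑ n, (⟪u n, u n⟫ : ℂ) = ⟪F g, F g⟫ := by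
      calc ∑ n, (⟪u n, u n⟫ : ℂ)
          = ∑ n, ∫ ω, ⟪(u n : EuclideanSpace ℝ (Fin d) → ℂ) ω,
              (u n : EuclideanSpace ℝ (Fin d) → ℂ) ω⟫ ∂volume := by
            refine Finset.sum_congr rfl fun n _ => ?_
            exact L2.inner_def _ _
        _ = ∫ ω, ∑ n, ⟪(u n : EuclideanSpace ℝ (Fin d) → ℂ) ω,
              (u n : EuclideanSpace ℝ (Fin d) → ℂ) ω⟫ ∂volume :=
            (integral_finset_sum _ (fun n _ => L2.integrable_inner (𝕜 := ℂ) (u n) (u n))).symm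
        _ = ∫ ω, ⟪(F g : EuclideanSpace ℝ (Fin d) → ℂ) ω,
              (F g : EuclideanSpace ℝ (Fin d) → ℂ) ω⟫ ∂volume := by
            refine integral_congr_ae ?_
            filter_upwards [hne, hcoe] with ω hω hc
            simp only [RCLike.inner_apply', hc]
            have hstep : ∀ n : Fin N,
                (starRingEnd ℂ) ((starRingEnd ℂ) (m n ω) *
                    (F g : EuclideanSpace ℝ (Fin d) → ℂ) ω) *
                  ((starRingEnd ℂ) (m n ω) *
                    (F g : EuclideanSpace ℝ (Fin d) → ℂ) ω) =
                ((‖m n ω‖ : ℂ)) ^ 2 *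
                  ((starRingEnd ℂ) ((F g : EuclideanSpace ℝ (Fin d) → ℂ) ω) *
                    (F g : EuclideanSpace ℝ (Fin d) → ℂ) ω) := by
              intro n
              rw [map_mul, RCLike.conj_conj]
              rw [show m n ω * (starRingEnd ℂ) ((F g : EuclideanSpace ℝ (Fin d) → ℂ) ω) *
                  ((starRingEnd ℂ) (m n ω) * (F g : EuclideanSpace ℝ (Fin d) → ℂ) ω) =
                  (m n ω * (starRingEnd ℂ) (m n ω)) *
                  ((starRingEnd ℂ) ((F g : EuclideanSpace ℝ (Fin d) → ℂ) ω) *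
                    (F g : EuclideanSpace ℝ (Fin d) → ℂ) ω) from by ring,
                RCLike.mul_conj]
              norm_cast
            rw [Finset.sum_congr rfl fun n _ => hstep n, ← Finset.sum_mul]
            have hone : (∑ n, ((‖m n ω‖ : ℂ)) ^ 2) = 1 := by
              norm_cast
              exact_mod_cast hpart ω hω
            rw [hone, one_mul]
        _ = ⟪F g, F g⟫ := (L2.inner_def _ _).symm
    have hre : ∑ n, RCLike.re (⟪u n, u n⟫ : ℂ) = RCLike.re (⟪F g, F g⟫ : ℂ) := by
      rw [← map_sum, hC]
    calc ∑ n, ‖θ n g‖ ^ 2 = ∑ n, ‖u n‖ ^ 2 := by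
          refine Finset.sum_congr rfl fun n _ => ?_
          have h5 : ‖θ n g‖ = ‖u n‖ := F.symm.norm_map (u n)
          rw [h5]
      _ = ∑ n, RCLike.re (⟪u n, u n⟫ : ℂ) := by
          refine Finset.sum_congr rfl fun n _ => (inner_self_eq_norm_sq (𝕜 := ℂ) (u n)).symm
      _ = RCLike.re (⟪F g, F g⟫ : ℂ) := hre
      _ = ‖F g‖ ^ 2 := inner_self_eq_norm_sq (𝕜 := ℂ) (F g)
      _ = ‖g‖ ^ 2 := by rw [F.norm_map]
  -- summability and Parseval identity for the new family
  have hψsummable : ∀ (x : Lp ℂ 2 (volume : Measure (EuclideanSpace ℝ (Fin d)))) (n : Fin N),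
      Summable fun k : ℤ => ‖⟪ψ k n, x⟫‖ ^ 2 := by
    intro x n
    refine (aux_summable_sq φ hφ (θ n x)).congr fun k => ?_
    rw [hinner]
  have hψtsum : ∀ (x : Lp ℂ 2 (volume : Measure (EuclideanSpace ℝ (Fin d)))) (n : Fin N),
      ∑' k : ℤ, ‖⟪ψ k n, x⟫‖ ^ 2 = ‖θ n x‖ ^ 2 := by
    intro x n
    rw [tsum_congr fun k => by rw [hinner k n x]]
    exact hφ (θ n x)
  have hPar : ∀ x : Lp ℂ 2 (volume : Measure (EuclideanSpace ℝ (Fin d))), ∑ n, ∑' k : ℤ, ‖⟪ψ k n, x⟫‖ ^ 2 = ‖x‖ ^ 2 := by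
    intro x
    rw [Finset.sum_congr rfl fun n _ => hψtsum x n]
    exact hnorm x
  set Ψ : Fin N × ℤ → Lp ℂ 2 (volume : Measure (EuclideanSpace ℝ (Fin d))) := fun p => ψ p.2 p.1 with hΨ
  have h1 : ∀ x : Lp ℂ 2 (volume : Measure (EuclideanSpace ℝ (Fin d))), Summable fun p : Fin N × ℤ => ‖⟪Ψ p, x⟫‖ ^ 2 := by
    intro x
    refine (summable_prod_of_nonneg ?_).2 ⟨fun n => hψsummable x n, ?_⟩
    · intro p; positivity
    · exact Summable.of_finite
  have h2 : ∀ x : Lp ℂ 2 (volume : Measure (EuclideanSpace ℝ (Fin d))), ∑' p : Fin N × ℤ, ‖⟪Ψ p, x⟫‖ ^ 2 = ‖x‖ ^ 2 := by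
    intro x
    rw [Summable.tsum_prod' (h1 x) (fun n => hψsummable x n), tsum_fintype]
    exact hPar x
  obtain ⟨hs, hrec⟩ := aux_frame_reconstruction Ψ h1 h2 f
  refine ⟨hPar f, ?_⟩
  rw [Summable.tsum_prod' hs (fun n => hs.prod_factor n), tsum_fintype] at hrec
  exact hrec.symm
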